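/- For every q > 0 and all u, v ∈ ℝ^N one has (1/(q+1)) |v|^{q+1} ≤ 2 𝔟[u,v] + 2^{2+1/q} (q/(q+1)) |u|^{q+1}. -/

import Mathlib

open Real RealInnerProductSpace

/-- The power `⟦w⟧^α := |w|^{α−1} w` (with `⟦0⟧^α = 0`). -/
noncomputable def vpow {N : ℕ} (α : ℝ) (w : EuclideanSpace ℝ (Fin N)) :
    EuclideanSpace ℝ (Fin N) :=
  ‖w‖ ^ (α - 1) • w

/-- The boundary term `𝔟[u,v] := (1/(q+1))|v|^{q+1} − (1/(q+1))|u|^{q+1} − ⟦u⟧^q · (v − u)`. -/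
noncomputable def bdry {N : ℕ} (q : ℝ) (u v : EuclideanSpace ℝ (Fin N)) : ℝ :=
  (1 / (q + 1)) * ‖v‖ ^ (q + 1) - (1 / (q + 1)) * ‖u‖ ^ (q + 1) - ⟪vpow q u, v - u⟫

/-- For every `q > 0` and all `u, v ∈ ℝ^N`,
`(1/(q+1)) |v|^{q+1} ≤ 2 𝔟[u,v] + 2^{2+1/q} (q/(q+1)) |u|^{q+1}`. -/
theorem bdry_lower_bound (N : ℕ) (q : ℝ) (hq : 0 < q)
    (u v : EuclideanSpace ℝ (Fin N)) :
    (1 / (q + 1)) * ‖v‖ ^ (q + 1) ≤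
      2 * bdry q u v + (2 : ℝ) ^ (2 + 1 / q) * (q / (q + 1)) * ‖u‖ ^ (q + 1) := by
  set a := ‖u‖ with ha_def
  set b := ‖v‖ with hb_def
  have ha : 0 ≤ a := norm_nonneg u
  have hb : 0 ≤ b := norm_nonneg v
  have hq1 : (0:ℝ) < q + 1 := by linarith
  -- Step 1: bound the inner product term
  have hinner : ⟪vpow q u, v - u⟫ ≤ a ^ q * b - a ^ (q + 1) := by
    rcases eq_or_lt_of_le ha with h0 | hpos
    · have hu : u = 0 := norm_eq_zero.mp h0.symm
      have e1 : a ^ (q + 1) = 0 := by rw [← h0]; exact Real.zero_rpow (by linarith)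
      have e2 : a ^ q = 0 := by rw [← h0]; exact Real.zero_rpow hq.ne'
      have e3 : vpow q u = 0 := by simp [vpow, hu]
      rw [e3, e1, e2]; simp
    · have key : ⟪vpow q u, v - u⟫ = a ^ (q - 1) * ⟪u, v⟫ - a ^ (q - 1) * a ^ (2:ℝ) := by
        rw [vpow, inner_smul_left, inner_sub_right, real_inner_self_eq_norm_sq]
        rw [Real.rpow_two]
        ring_nf
        simp [RCLike.conj_to_real]
        try ring
      rw [key]
      have h1 : a ^ (q - 1) * a ^ (2:ℝ) = a ^ (q + 1) := by
        rw [← Real.rpow_add hpos]; ring_nf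
      have h2 : a ^ (q - 1) * ⟪u, v⟫ ≤ a ^ q * b := by
        have := real_inner_le_norm u v
        calc a ^ (q - 1) * ⟪u, v⟫ ≤ a ^ (q - 1) * (a * b) := by
              apply mul_le_mul_of_nonneg_left _ (Real.rpow_nonneg ha _)
              simpa using this
          _ = a ^ q * b := by rw [← mul_assoc, ← Real.rpow_add_one hpos.ne']; ring_nf
      linarith
  -- Step 2: Young's inequality
  set K := (2:ℝ) ^ (1 / q) with hK_def
  have hK : 0 < K := Real.rpow_pos_of_pos two_pos _
  have hconj : (q + 1).HolderConjugate ((q + 1) / q) := by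
    rw [Real.holderConjugate_iff]
    constructor
    · linarith
    · field_simp
      ring
  have young : b * (2 * a ^ q) ≤ b ^ (q + 1) / (q + 1) +
      (2 * a ^ q) ^ ((q + 1) / q) / ((q + 1) / q) := by
    exact Real.young_inequality_of_nonneg hb (by positivity) hconj
  have hpow : (2 * a ^ q) ^ ((q + 1) / q) = 2 * K * a ^ (q + 1) := by
    have e1 : (q + 1) / q = 1 + 1 / q := by field_simp
    have e2 : q * ((q + 1) / q) = q + 1 := by field_simp
    rw [Real.mul_rpow (by norm_num) (Real.rpow_nonneg ha q),
      ← Real.rpow_mul ha, e2, e1, Real.rpow_add two_pos, Real.rpow_one, hK_def]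
  have hdiv : (2 * a ^ q) ^ ((q + 1) / q) / ((q + 1) / q) =
      2 * K * (q / (q + 1)) * a ^ (q + 1) := by
    rw [hpow, div_eq_mul_inv, inv_div]; ring
  have young' : 2 * (a ^ q * b) ≤ b ^ (q + 1) / (q + 1) +
      2 * K * (q / (q + 1)) * a ^ (q + 1) := by
    rw [← hdiv]; linarith [young]
  -- Step 3: combine
  have h4 : (2:ℝ) ^ (2:ℝ) = 4 := by
    rw [show (2:ℝ) = ((2:ℕ):ℝ) from by norm_num, Real.rpow_natCast]; norm_num
  have h2exp : (2:ℝ) ^ (2 + 1 / q) = 4 * K := by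
    rw [Real.rpow_add two_pos, h4, hK_def]
  rw [h2exp, bdry]
  set A := a ^ (q + 1) with hA_def
  set B := b ^ (q + 1) with hB_def
  have hA : 0 ≤ A := Real.rpow_nonneg ha _
  have hB : 0 ≤ B := Real.rpow_nonneg hb _
  have hc : 1 / (q + 1) ≤ 1 := by
    rw [div_le_one hq1]; linarith
  have hcA : (1 / (q + 1)) * A ≤ A := by
    nlinarith
  have hKA : 0 ≤ K * (q / (q + 1)) * A := by positivity
  have hBdiv : B / (q + 1) = (1 / (q + 1)) * B := by ring
  nlinarith [young', hinner, hcA, hKA]
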